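/- Let n and m be natural numbers with 2m ≤ n. Let M be the real n×n matrix whose only nonzero entries are M_{2i−1,2i} = μ_i and M_{2i,2i−1} = −μ_i for 1 ≤ i ≤ m (with μ_i ∈ ℝ), and let A be any real diagonal n×n matrix. Let X be either E_{2i−1,2i} − E_{2i,2i−1} for some 1 ≤ i ≤ m, or E_{kl} − E_{lk} for some 2m < k, l ≤ n, where E_{kl} denotes the matrix unit. Then for every real skew-symmetric n×n matrix Y, Tr(M·(X·A·Y − Y·A·X)) = 0. (Thus the subspace K spanned by these elements lies in the common kernel of all brackets of the pencil at the point M.) -/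

import Mathlib

open Matrix

/-- The index `2i−1` (1-based), i.e. the first index of the `i`-th `2×2` block. -/
def idxA {n m : ℕ} (h : 2 * m ≤ n) (i : Fin m) : Fin n :=
  ⟨2 * i.val, by have := i.isLt; omega⟩

/-- The index `2i` (1-based), i.e. the second index of the `i`-th `2×2` block. -/
def idxB {n m : ℕ} (h : 2 * m ≤ n) (i : Fin m) : Fin n :=
  ⟨2 * i.val + 1, by have := i.isLt; omega⟩

/-- The block-diagonal skew-symmetric momentum matrix whose only nonzero entries are
`M_{2i−1,2i} = μ_i` and `M_{2i,2i−1} = −μ_i` for `1 ≤ i ≤ m`. -/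
def blockMom {n m : ℕ} (h : 2 * m ≤ n) (μ : Fin m → ℝ) : Matrix (Fin n) (Fin n) ℝ :=
  ∑ i : Fin m,
    (Matrix.single (idxA h i) (idxB h i) (μ i) -
      Matrix.single (idxB h i) (idxA h i) (μ i))

lemma diag_comm_std {n : ℕ} (A : Matrix (Fin n) (Fin n) ℝ) (hA : A.IsDiag)
    (d : Fin n) (c : ℝ) :
    Matrix.single d d c * A = A * Matrix.single d d c := by
  ext a b
  by_cases ha : a = d
  · by_cases hb : b = d
    · subst ha; subst hb; simp [mul_comm]
    · subst ha
      rw [Matrix.single_mul_apply_same c a a b A,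
        Matrix.mul_single_apply_of_ne c a a a b hb A]
      rw [hA (Ne.symm hb), mul_zero]
  · by_cases hb : b = d
    · subst hb
      rw [Matrix.mul_single_apply_same c b b a A,
        Matrix.single_mul_apply_of_ne c b b a b ha A]
      rw [hA ha, zero_mul]
    · rw [Matrix.single_mul_apply_of_ne c d d a b ha A,
        Matrix.mul_single_apply_of_ne c d d a b hb A]

/-- The subspace `K` lies in the common kernel of all brackets of the pencil at `M`:
for every diagonal `A`, every generator `X` of `K` (either `E_{2i−1,2i} − E_{2i,2i−1}`
with `1 ≤ i ≤ m`, or `E_{kl} − E_{lk}` with `2m < k, l ≤ n`), and every skew-symmetric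
`Y`, one has `Tr(M·(X·A·Y − Y·A·X)) = 0`. -/
theorem K_in_common_kernel (n m : ℕ) (h : 2 * m ≤ n) (μ : Fin m → ℝ)
    (A : Matrix (Fin n) (Fin n) ℝ) (hA : A.IsDiag)
    (X : Matrix (Fin n) (Fin n) ℝ)
    (hX : (∃ i : Fin m,
            X = Matrix.single (idxA h i) (idxB h i) (1 : ℝ) -
              Matrix.single (idxB h i) (idxA h i) (1 : ℝ)) ∨
          (∃ k l : Fin n, 2 * m ≤ k.val ∧ 2 * m ≤ l.val ∧
            X = Matrix.single k l (1 : ℝ) - Matrix.single l k (1 : ℝ))) :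
    ∀ Y : Matrix (Fin n) (Fin n) ℝ, Yᵀ = -Y →
      (blockMom h μ * (X * A * Y - Y * A * X)).trace = 0 := by
  set M := blockMom h μ with hM
  -- Key algebraic facts: `X * M = M * X` and `(M * X) * A = A * (M * X)`.
  have key : X * M = M * X ∧ (M * X) * A = A * (M * X) := by
    rcases hX with ⟨i0, rfl⟩ | ⟨k, l, hk, hl, rfl⟩
    · -- block generator
      have hpq : idxA h i0 ≠ idxB h i0 := by
        simp only [idxA, idxB, Ne, Fin.ext_iff]; omega
      have hMX : M * (Matrix.single (idxA h i0) (idxB h i0) (1 : ℝ) -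
          Matrix.single (idxB h i0) (idxA h i0) (1 : ℝ)) =
          -(Matrix.single (idxA h i0) (idxA h i0) (μ i0) +
            Matrix.single (idxB h i0) (idxB h i0) (μ i0)) := by
        rw [hM, blockMom, Finset.sum_mul]
        rw [Finset.sum_eq_single i0]
        · rw [sub_mul, mul_sub, mul_sub]
          simp only [Matrix.single_mul_single_of_ne _ _ _ _ hpq.symm,
            Matrix.single_mul_single_of_ne _ _ _ _ hpq,
            Matrix.single_mul_single_same, mul_one]
          abel
        · intro i _ hi
          have h1 : idxB h i ≠ idxA h i0 := by
            simp only [idxA, idxB, Ne, Fin.ext_iff]; omega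
          have h2 : idxB h i ≠ idxB h i0 := by
            simp only [idxB, Ne, Fin.ext_iff]
            intro hh; exact hi (Fin.ext (by omega))
          have h3 : idxA h i ≠ idxA h i0 := by
            simp only [idxA, Ne, Fin.ext_iff]
            intro hh; exact hi (Fin.ext (by omega))
          have h4 : idxA h i ≠ idxB h i0 := by
            simp only [idxA, idxB, Ne, Fin.ext_iff]; omega
          rw [sub_mul, mul_sub, mul_sub]
          simp only [Matrix.single_mul_single_of_ne _ _ _ _ h1,
            Matrix.single_mul_single_of_ne _ _ _ _ h2,
            Matrix.single_mul_single_of_ne _ _ _ _ h3,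
            Matrix.single_mul_single_of_ne _ _ _ _ h4]
          simp
        · simp
      have hXM : (Matrix.single (idxA h i0) (idxB h i0) (1 : ℝ) -
          Matrix.single (idxB h i0) (idxA h i0) (1 : ℝ)) * M =
          -(Matrix.single (idxA h i0) (idxA h i0) (μ i0) +
            Matrix.single (idxB h i0) (idxB h i0) (μ i0)) := by
        rw [hM, blockMom, Finset.mul_sum]
        rw [Finset.sum_eq_single i0]
        · rw [mul_sub, sub_mul, sub_mul]
          simp only [Matrix.single_mul_single_of_ne _ _ _ _ hpq.symm,
            Matrix.single_mul_single_of_ne _ _ _ _ hpq,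
            Matrix.single_mul_single_same, one_mul]
          abel
        · intro i _ hi
          have h1 : idxA h i0 ≠ idxA h i := by
            simp only [idxA, Ne, Fin.ext_iff]
            intro hh; exact hi (Fin.ext (by omega))
          have h2 : idxA h i0 ≠ idxB h i := by
            simp only [idxA, idxB, Ne, Fin.ext_iff]; omega
          have h3 : idxB h i0 ≠ idxA h i := by
            simp only [idxA, idxB, Ne, Fin.ext_iff]; omega
          have h4 : idxB h i0 ≠ idxB h i := by
            simp only [idxB, Ne, Fin.ext_iff]
            intro hh; exact hi (Fin.ext (by omega))
          rw [mul_sub, sub_mul, sub_mul]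
          simp only [Matrix.single_mul_single_of_ne _ _ _ _ h1,
            Matrix.single_mul_single_of_ne _ _ _ _ h2,
            Matrix.single_mul_single_of_ne _ _ _ _ h3,
            Matrix.single_mul_single_of_ne _ _ _ _ h4]
          simp
        · simp
      refine ⟨by rw [hMX, hXM], ?_⟩
      rw [hMX, neg_mul, mul_neg, add_mul, mul_add,
        diag_comm_std A hA (idxA h i0) (μ i0), diag_comm_std A hA (idxB h i0) (μ i0)]
    · -- generator supported away from the blocks
      have hMX : M * (Matrix.single k l (1 : ℝ) -
          Matrix.single l k (1 : ℝ)) = 0 := by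
        rw [hM, blockMom, Finset.sum_mul]
        refine Finset.sum_eq_zero fun i _ => ?_
        have h1 : idxB h i ≠ k := by
          simp only [idxB, Ne, Fin.ext_iff]; have := i.isLt; omega
        have h2 : idxB h i ≠ l := by
          simp only [idxB, Ne, Fin.ext_iff]; have := i.isLt; omega
        have h3 : idxA h i ≠ k := by
          simp only [idxA, Ne, Fin.ext_iff]; have := i.isLt; omega
        have h4 : idxA h i ≠ l := by
          simp only [idxA, Ne, Fin.ext_iff]; have := i.isLt; omega
        rw [sub_mul, mul_sub, mul_sub]
        simp only [Matrix.single_mul_single_of_ne _ _ _ _ h1,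
          Matrix.single_mul_single_of_ne _ _ _ _ h2,
          Matrix.single_mul_single_of_ne _ _ _ _ h3,
          Matrix.single_mul_single_of_ne _ _ _ _ h4]
        simp
      have hXM : (Matrix.single k l (1 : ℝ) -
          Matrix.single l k (1 : ℝ)) * M = 0 := by
        rw [hM, blockMom, Finset.mul_sum]
        refine Finset.sum_eq_zero fun i _ => ?_
        have h1 : l ≠ idxA h i := by
          simp only [idxA, Ne, Fin.ext_iff]; have := i.isLt; omega
        have h2 : l ≠ idxB h i := by
          simp only [idxB, Ne, Fin.ext_iff]; have := i.isLt; omega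
        have h3 : k ≠ idxA h i := by
          simp only [idxA, Ne, Fin.ext_iff]; have := i.isLt; omega
        have h4 : k ≠ idxB h i := by
          simp only [idxB, Ne, Fin.ext_iff]; have := i.isLt; omega
        rw [mul_sub, sub_mul, sub_mul]
        simp only [Matrix.single_mul_single_of_ne _ _ _ _ h1,
          Matrix.single_mul_single_of_ne _ _ _ _ h2,
          Matrix.single_mul_single_of_ne _ _ _ _ h3,
          Matrix.single_mul_single_of_ne _ _ _ _ h4]
        simp
      exact ⟨by rw [hMX, hXM], by rw [hMX]; simp⟩
  obtain ⟨hXM, hcomm⟩ := key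
  intro Y _
  have e1 : M * (X * A * Y - Y * A * X) = (M * X) * A * Y - (M * Y * A) * X := by
    noncomm_ring
  rw [e1, Matrix.trace_sub, Matrix.trace_mul_comm (M * Y * A) X]
  have e2 : X * (M * Y * A) = (M * X) * (Y * A) := by
    rw [← Matrix.mul_assoc, ← Matrix.mul_assoc, hXM, Matrix.mul_assoc, Matrix.mul_assoc]
  rw [e2, Matrix.trace_mul_comm (M * X) (Y * A), Matrix.mul_assoc Y A (M * X), ← hcomm,
    Matrix.trace_mul_comm Y (M * X * A), sub_self]
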